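/- Let G be a finite simple graph and e an edge of G. Then γ*_{rk}(G) − 1 ≤ γ*_{rk}(G − e) ≤ γ*_{rk}(G) + k, where G − e denotes the graph obtained from G by deleting the edge e. -/

import Mathlib

open SimpleGraph Finset

/-- A `k`-rainbow dominating function on a graph `H`. -/
def IsRDF {W : Type*} (H : SimpleGraph W) (k : ℕ) (f : W → Finset (Fin k)) : Prop :=
  ∀ w, f w = ∅ → ∀ c : Fin k, ∃ u, H.Adj w u ∧ c ∈ f u

/-- The weight of a rainbow dominating function. -/
noncomputable def rdfWeight {W : Type*} [Fintype W] {k : ℕ} (f : W → Finset (Fin k)) : ℕ :=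
  ∑ w, (f w).card

/-- The `k`-rainbow domination number of a graph. -/
noncomputable def rdn {W : Type*} [Fintype W] (H : SimpleGraph W) (k : ℕ) : ℕ :=
  sInf {n | ∃ f : W → Finset (Fin k), IsRDF H k f ∧ rdfWeight f = n}

/-- The middle graph of `G`, on vertex set `V(G) ⊕ E(G)`. -/
def middleGraph {V : Type*} (G : SimpleGraph V) : SimpleGraph (V ⊕ G.edgeSet) where
  Adj x y :=
    match x, y with
    | Sum.inl _, Sum.inl _ => False
    | Sum.inl v, Sum.inr e => v ∈ (e : Sym2 V)
    | Sum.inr e, Sum.inl v => v ∈ (e : Sym2 V)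
    | Sum.inr e, Sum.inr f => e ≠ f ∧ ∃ v, v ∈ (e : Sym2 V) ∧ v ∈ (f : Sym2 V)
  symm := by
    constructor
    rintro (v | e) (w | f) h
    · exact h.elim
    · exact h
    · exact h
    · exact ⟨Ne.symm h.1, h.2.imp fun v hv => ⟨hv.2, hv.1⟩⟩
  loopless := by
    constructor
    rintro (v | e) h
    · exact h.elim
    · exact h.1 rfl

/-- The middle `k`-rainbow domination number `γ*_{rk}(G)`. -/
noncomputable def mrdn {V : Type*} [Fintype V] (G : SimpleGraph V) (k : ℕ) : ℕ :=
  letI := Classical.decEq V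
  letI : DecidableRel G.Adj := fun _ _ => Classical.dec _
  rdn (middleGraph G) k

/-- The `k`-rainbow domatic number: the maximum size of a family of `k`-rainbow
dominating functions with `∑ i |f i v| ≤ k` for each vertex `v`. -/
noncomputable def rdomatic {W : Type*} (H : SimpleGraph W) (k : ℕ) : ℕ :=
  sSup {d | ∃ F : Fin d → W → Finset (Fin k), Function.Injective F ∧
    (∀ i, IsRDF H k (F i)) ∧ ∀ w, (∑ i, (F i w).card) ≤ k}

/-- The matching number `α'(G)`. -/
noncomputable def matchingNumber {V : Type*} [Fintype V] (G : SimpleGraph V) : ℕ :=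
  sSup {n | ∃ M : Finset (Sym2 V), ↑M ⊆ G.edgeSet ∧
    (∀ e ∈ M, ∀ f ∈ M, e ≠ f → ∀ v : V, ¬(v ∈ e ∧ v ∈ f)) ∧ M.card = n}

section Aux

variable {V : Type*}

/-- Inclusion of the edge set of `G − s` into that of `G`. -/
lemma mem_diff_of_deleteEdges {G : SimpleGraph V} {s : Set (Sym2 V)}
    (y : ↥(G.deleteEdges s).edgeSet) : (y : Sym2 V) ∈ G.edgeSet \ s := by
  rw [← SimpleGraph.edgeSet_deleteEdges]
  exact y.2

def upEdge {G : SimpleGraph V} {s : Set (Sym2 V)} (y : ↥(G.deleteEdges s).edgeSet) :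
    ↥G.edgeSet :=
  ⟨y.1, (mem_diff_of_deleteEdges y).1⟩

lemma upEdge_ne {G : SimpleGraph V} {e : Sym2 V} (y : ↥(G.deleteEdges {e}).edgeSet) :
    (y : Sym2 V) ≠ e := by
  simpa using (mem_diff_of_deleteEdges y).2

/-- An edge of `G` distinct from `e` is an edge of `G − e`. -/
def downEdge {G : SimpleGraph V} {e : Sym2 V} (x : ↥G.edgeSet) (hx : (x : Sym2 V) ≠ e) :
    ↥(G.deleteEdges {e}).edgeSet :=
  ⟨x.1, by rw [SimpleGraph.edgeSet_deleteEdges]; exact ⟨x.2, by simpa using hx⟩⟩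

lemma isRDF_exists_min {W : Type*} [Fintype W] (H : SimpleGraph W) (k : ℕ) :
    ∃ f : W → Finset (Fin k), IsRDF H k f ∧ rdfWeight f = rdn H k := by
  have hne : {n | ∃ f : W → Finset (Fin k), IsRDF H k f ∧ rdfWeight f = n}.Nonempty := by
    refine ⟨_, fun _ => Finset.univ, ?_, rfl⟩
    intro w hw c
    have : (Finset.univ : Finset (Fin k)).Nonempty := ⟨c, Finset.mem_univ c⟩
    exact absurd hw this.ne_empty
  exact Nat.sInf_mem hne

lemma rdn_le_weight {W : Type*} [Fintype W] (H : SimpleGraph W) (k : ℕ)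
    {f : W → Finset (Fin k)} (hf : IsRDF H k f) : rdn H k ≤ rdfWeight f :=
  Nat.sInf_le ⟨f, hf, rfl⟩

lemma rdn_zero {W : Type*} [Fintype W] (H : SimpleGraph W) : rdn H 0 = 0 := by
  have h := rdn_le_weight H 0 (f := fun _ => (∅ : Finset (Fin 0)))
    (fun w hw c => c.elim0)
  simpa [rdfWeight] using h

lemma sum_up (G : SimpleGraph V) (e : Sym2 V) (he : e ∈ G.edgeSet)
    [Fintype ↥G.edgeSet] [Fintype ↥(G.deleteEdges {e}).edgeSet]
    (F : ↥G.edgeSet → ℕ) :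
    ∑ x, F x = (∑ y : ↥(G.deleteEdges {e}).edgeSet, F (upEdge y)) + F ⟨e, he⟩ := by
  classical
  rw [← Finset.sum_erase_add Finset.univ F (Finset.mem_univ ⟨e, he⟩)]
  congr 1
  refine (Finset.sum_bij (fun (y : ↥(G.deleteEdges {e}).edgeSet) (_ : y ∈ Finset.univ) =>
      upEdge y) ?_ ?_ ?_ ?_).symm
  · intro y _
    refine Finset.mem_erase.mpr ⟨?_, Finset.mem_univ _⟩
    intro h
    exact upEdge_ne y (congrArg Subtype.val h)
  · intro y _ y' _ h
    have h' : upEdge y = upEdge y' := h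
    have h2 := congrArg Subtype.val h'
    exact Subtype.ext h2
  · intro x hx
    have hxe : (x : Sym2 V) ≠ e := fun h => (Finset.mem_erase.mp hx).1 (Subtype.ext h)
    exact ⟨downEdge x hxe, Finset.mem_univ _, rfl⟩
  · intro y _
    rfl

lemma key1 (G : SimpleGraph V) (e : Sym2 V) (he : e ∈ G.edgeSet) (k : ℕ)
    [iG : Fintype (V ⊕ ↥G.edgeSet)] [iD : Fintype (V ⊕ ↥(G.deleteEdges {e}).edgeSet)] :
    rdn (middleGraph G) k ≤ rdn (middleGraph (G.deleteEdges {e})) k + 1 := by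
  classical
  rcases Nat.eq_zero_or_pos k with hk | hk
  · subst hk; simp [rdn_zero]
  haveI fV : Fintype V := Fintype.ofInjective (Sum.inl : V → V ⊕ ↥G.edgeSet) Sum.inl_injective
  haveI fE : Fintype ↥G.edgeSet :=
    Fintype.ofInjective (Sum.inr : ↥G.edgeSet → V ⊕ ↥G.edgeSet) Sum.inr_injective
  haveI fD : Fintype ↥(G.deleteEdges {e}).edgeSet :=
    Fintype.ofInjective (Sum.inr : _ → V ⊕ ↥(G.deleteEdges {e}).edgeSet) Sum.inr_injective
  rw [Subsingleton.elim iG (instFintypeSum V ↥G.edgeSet),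
    Subsingleton.elim iD (instFintypeSum V ↥(G.deleteEdges {e}).edgeSet)]
  clear iG iD
  obtain ⟨f, hf, hwf⟩ := isRDF_exists_min (middleGraph (G.deleteEdges {e})) k
  set c0 : Fin k := ⟨0, hk⟩ with hc0
  let F : (V ⊕ ↥G.edgeSet) → Finset (Fin k) := Sum.elim (fun v => f (Sum.inl v))
    (fun x => if h : (x : Sym2 V) = e then {c0} else f (Sum.inr (downEdge x h)))
  have hFl : ∀ v, F (Sum.inl v) = f (Sum.inl v) := fun _ => rfl
  have hFr : ∀ (x : ↥G.edgeSet) (h : (x : Sym2 V) ≠ e),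
      F (Sum.inr x) = f (Sum.inr (downEdge x h)) := fun x h => by exact dif_neg h
  have hFe : F (Sum.inr ⟨e, he⟩) = {c0} := by exact dif_pos rfl
  have hF : IsRDF (middleGraph G) k F := by
    rintro (v | x) hw c
    · obtain ⟨u, hu, hcu⟩ := hf (Sum.inl v) hw c
      match u, hu, hcu with
      | Sum.inl w, hu, hcu => exact hu.elim
      | Sum.inr y, hu, hcu =>
        refine ⟨Sum.inr (upEdge y), hu, ?_⟩
        rw [hFr (upEdge y) (upEdge_ne y)]
        exact hcu
    · by_cases hx : (x : Sym2 V) = e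
      · exfalso
        have hxe : x = (⟨e, he⟩ : ↥G.edgeSet) := Subtype.ext hx
        rw [hxe, hFe] at hw
        exact Finset.singleton_ne_empty c0 hw
      · rw [hFr x hx] at hw
        obtain ⟨u, hu, hcu⟩ := hf (Sum.inr (downEdge x hx)) hw c
        match u, hu, hcu with
        | Sum.inl w, hu, hcu => exact ⟨Sum.inl w, hu, hcu⟩
        | Sum.inr y, hu, hcu =>
          refine ⟨Sum.inr (upEdge y), ⟨?_, hu.2⟩, ?_⟩
          · intro hxy
            apply hu.1
            apply Subtype.ext
            have h2 := congrArg (Subtype.val (p := fun x => x ∈ G.edgeSet)) hxy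
            exact h2
          · rw [hFr (upEdge y) (upEdge_ne y)]
            exact hcu
  have hW : rdfWeight F = rdfWeight f + 1 := by
    unfold rdfWeight
    rw [Fintype.sum_sum_type, Fintype.sum_sum_type,
      sum_up G e he (fun x => (F (Sum.inr x)).card)]
    have h1 : ∀ y : ↥(G.deleteEdges {e}).edgeSet,
        (F (Sum.inr (upEdge y))).card = (f (Sum.inr y)).card := by
      intro y
      rw [hFr (upEdge y) (upEdge_ne y)]
      rfl
    have h2 : (F (Sum.inr ⟨e, he⟩)).card = 1 := by rw [hFe]; exact Finset.card_singleton c0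
    rw [Finset.sum_congr rfl (fun y _ => h1 y), h2]
    simp only [hFl]
    ring
  calc rdn (middleGraph G) k ≤ rdfWeight F := rdn_le_weight _ _ hF
    _ = rdn (middleGraph (G.deleteEdges {e})) k + 1 := by rw [hW, hwf]

lemma key2 (G : SimpleGraph V) {a b : V} (hab : G.Adj a b) (k : ℕ)
    [iG : Fintype (V ⊕ ↥G.edgeSet)]
    [iD : Fintype (V ⊕ ↥(G.deleteEdges {s(a, b)}).edgeSet)] :
    rdn (middleGraph (G.deleteEdges {s(a, b)})) k ≤ rdn (middleGraph G) k + k := by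
  classical
  haveI fV : Fintype V := Fintype.ofInjective (Sum.inl : V → V ⊕ ↥G.edgeSet) Sum.inl_injective
  haveI fE : Fintype ↥G.edgeSet :=
    Fintype.ofInjective (Sum.inr : ↥G.edgeSet → V ⊕ ↥G.edgeSet) Sum.inr_injective
  haveI fD : Fintype ↥(G.deleteEdges {s(a, b)}).edgeSet :=
    Fintype.ofInjective (Sum.inr : _ → V ⊕ ↥(G.deleteEdges {s(a, b)}).edgeSet) Sum.inr_injective
  rw [Subsingleton.elim iG (instFintypeSum V ↥G.edgeSet),
    Subsingleton.elim iD (instFintypeSum V ↥(G.deleteEdges {s(a, b)}).edgeSet)]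
  clear iG iD
  obtain ⟨g, hg, hwg⟩ := isRDF_exists_min (middleGraph G) k
  have he : s(a, b) ∈ G.edgeSet := G.mem_edgeSet.mpr hab
  have hne : a ≠ b := hab.ne
  set e0 : ↥G.edgeSet := ⟨s(a, b), he⟩ with he0
  let f : (V ⊕ ↥(G.deleteEdges {s(a, b)}).edgeSet) → Finset (Fin k) := Sum.elim
    (fun v => if v = a then Finset.univ else
      if v = b then g (Sum.inl b) ∪ g (Sum.inr e0) else g (Sum.inl v))
    (fun y => g (Sum.inr (upEdge y)))
  have hfa : f (Sum.inl a) = Finset.univ := by exact if_pos rfl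
  have hfb : f (Sum.inl b) = g (Sum.inl b) ∪ g (Sum.inr e0) := by
    exact (if_neg (Ne.symm hne)).trans (if_pos rfl)
  have hfv : ∀ v, v ≠ a → v ≠ b → f (Sum.inl v) = g (Sum.inl v) := fun v h1 h2 => by
    exact (if_neg h1).trans (if_neg h2)
  have hfr : ∀ y, f (Sum.inr y) = g (Sum.inr (upEdge y)) := fun _ => rfl
  have hf : IsRDF (middleGraph (G.deleteEdges {s(a, b)})) k f := by
    rintro (v | y) hw c
    · by_cases hva : v = a
      · exfalso
        rw [hva, hfa] at hw
        exact absurd (hw ▸ Finset.mem_univ c) (Finset.notMem_empty c)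
      by_cases hvb : v = b
      · rw [hvb] at hw
        rw [hvb]
        rw [hfb] at hw
        obtain ⟨h1, h2⟩ := Finset.union_eq_empty.mp hw
        obtain ⟨u, hu, hcu⟩ := hg (Sum.inl b) h1 c
        match u, hu, hcu with
        | Sum.inl w, hu, hcu => exact hu.elim
        | Sum.inr x, hu, hcu =>
          have hxe : (x : Sym2 V) ≠ s(a, b) := by
            intro hh
            rw [show x = e0 from Subtype.ext hh, h2] at hcu
            exact Finset.notMem_empty c hcu
          refine ⟨Sum.inr (downEdge x hxe), hu, ?_⟩
          rw [hfr]
          exact hcu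
      · rw [hfv v hva hvb] at hw
        obtain ⟨u, hu, hcu⟩ := hg (Sum.inl v) hw c
        match u, hu, hcu with
        | Sum.inl w, hu, hcu => exact hu.elim
        | Sum.inr x, hu, hcu =>
          have hxe : (x : Sym2 V) ≠ s(a, b) := by
            intro hh
            have : v ∈ s(a, b) := hh ▸ hu
            rcases Sym2.mem_iff.mp this with h | h
            · exact hva h
            · exact hvb h
          refine ⟨Sum.inr (downEdge x hxe), hu, ?_⟩
          rw [hfr]
          exact hcu
    · rw [hfr] at hw
      obtain ⟨u, hu, hcu⟩ := hg (Sum.inr (upEdge y)) hw c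
      match u, hu, hcu with
      | Sum.inl w, hu, hcu =>
        refine ⟨Sum.inl w, hu, ?_⟩
        by_cases hwa : w = a
        · rw [hwa, hfa]; exact Finset.mem_univ c
        by_cases hwb : w = b
        · rw [hwb] at hcu; rw [hwb, hfb]; exact Finset.mem_union_left _ hcu
        · rw [hfv w hwa hwb]; exact hcu
      | Sum.inr x, hu, hcu =>
        by_cases hxe : (x : Sym2 V) = s(a, b)
        · -- the witness was the deleted edge; one of its endpoints works
          obtain ⟨v0, hv0y, hv0x⟩ := hu.2
          have hcu' : c ∈ g (Sum.inr e0) := by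
            rw [show x = e0 from Subtype.ext hxe] at hcu
            exact hcu
          have hv0ab : v0 ∈ s(a, b) := hxe ▸ hv0x
          refine ⟨Sum.inl v0, hv0y, ?_⟩
          rcases Sym2.mem_iff.mp hv0ab with h | h
          · rw [h, hfa]; exact Finset.mem_univ c
          · rw [h, hfb]; exact Finset.mem_union_right _ hcu'
        · refine ⟨Sum.inr (downEdge x hxe), ⟨?_, hu.2⟩, ?_⟩
          · intro hyx
            apply hu.1
            apply Subtype.ext
            have h2 := congrArg (Subtype.val (p := fun x => x ∈ (G.deleteEdges {s(a, b)}).edgeSet)) hyx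
            exact h2
          · rw [hfr]
            exact hcu
  have hW : rdfWeight f + (g (Sum.inr e0)).card ≤ rdfWeight g + k + (g (Sum.inr e0)).card := by
    unfold rdfWeight
    rw [Fintype.sum_sum_type, Fintype.sum_sum_type,
      sum_up G s(a, b) he (fun x => (g (Sum.inr x)).card)]
    have hsum1 : (∑ v, (f (Sum.inl v)).card) ≤
        (∑ v, ((g (Sum.inl v)).card + ((if v = a then k else 0) +
          (if v = b then (g (Sum.inr e0)).card else 0)))) := by
      apply Finset.sum_le_sum
      intro v _
      by_cases hva : v = a
      · rw [hva, hfa, if_pos rfl]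
        simp only [Finset.card_univ, Fintype.card_fin]
        omega
      by_cases hvb : v = b
      · rw [hvb, hfb, if_neg (Ne.symm hne), if_pos rfl]
        calc (g (Sum.inl b) ∪ g (Sum.inr e0)).card
            ≤ (g (Sum.inl b)).card + (g (Sum.inr e0)).card := Finset.card_union_le _ _
          _ ≤ _ := by omega
      · rw [hfv v hva hvb, if_neg hva, if_neg hvb]
        omega
    have hsum2 : (∑ v, ((g (Sum.inl v)).card + ((if v = a then k else 0) +
          (if v = b then (g (Sum.inr e0)).card else 0)))) =
        (∑ v, (g (Sum.inl v)).card) + k + (g (Sum.inr e0)).card := by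
      rw [Finset.sum_add_distrib, Finset.sum_add_distrib,
        Finset.sum_ite_eq' Finset.univ a (fun _ => k),
        Finset.sum_ite_eq' Finset.univ b (fun _ => (g (Sum.inr e0)).card)]
      simp [add_assoc]
    have hsum3 : (∑ y, (f (Sum.inr y)).card) =
        ∑ y : ↥(G.deleteEdges {s(a, b)}).edgeSet, (g (Sum.inr (upEdge y))).card :=
      Finset.sum_congr rfl (fun y _ => by rw [hfr])
    rw [hsum3]
    simp only [← he0]
    omega
  have hW' : rdfWeight f ≤ rdfWeight g + k := by omega
  calc rdn (middleGraph (G.deleteEdges {s(a, b)})) k ≤ rdfWeight f := rdn_le_weight _ _ hf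
    _ ≤ rdn (middleGraph G) k + k := by rw [← hwg]; exact hW'

end Aux

/-- For an edge `e` of `G`,
`γ*_{rk}(G) − 1 ≤ γ*_{rk}(G − e) ≤ γ*_{rk}(G) + k`. -/
theorem stmt4 {V : Type*} [Fintype V] (G : SimpleGraph V) (k : ℕ) (e : Sym2 V)
    (he : e ∈ G.edgeSet) :
    mrdn G k - 1 ≤ mrdn (G.deleteEdges {e}) k ∧
    mrdn (G.deleteEdges {e}) k ≤ mrdn G k + k := by
  classical
  simp only [mrdn]
  revert he
  induction e using Sym2.ind with
  | _ a b =>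
    intro he
    have hab : G.Adj a b := G.mem_edgeSet.mp he
    exact ⟨tsub_le_iff_right.mpr (by convert key1 G s(a, b) he k), by convert key2 G hab k⟩
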